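/- Let K be a field, F ∈ K[x^{±1}, y^{±1}] a Laurent polynomial with support A ⊆ ℤ², and suppose F ∈ ⟨x-1, y-1⟩^m in the local ring at (1,1). If the lattice width of A in the direction u = (1,0) satisfies ω_{(1,0)}(A) = m - a for some a > 0, then (y-1)^a divides F. -/

import Mathlib

noncomputable section

abbrev Laurent2 (K : Type*) [Field K] := AddMonoidAlgebra K (ℤ × ℤ)

variable {K : Type*} [Field K]

noncomputable def Lx (K : Type*) [Field K] : Laurent2 K := AddMonoidAlgebra.single (1, 0) 1
noncomputable def Ly (K : Type*) [Field K] : Laurent2 K := AddMonoidAlgebra.single (0, 1) 1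

noncomputable def idealPt (K : Type*) [Field K] : Ideal (Laurent2 K) :=
  Ideal.span {Lx K - 1, Ly K - 1}

namespace VD

abbrev R1 (K : Type*) [Field K] := AddMonoidAlgebra K ℤ

noncomputable def Tm (K : Type*) [Field K] : R1 K := AddMonoidAlgebra.single 1 1

noncomputable def bc (K : Type*) [Field K] (j : ℤ) (k : ℕ) : K :=
  ((Ring.choose j k : ℤ) : K)

lemma bc_zero (j : ℤ) : bc K j 0 = 1 := by
  simp [bc, Ring.choose_zero_right]

lemma bc_pascal (j : ℤ) (k : ℕ) : bc K (1 + j) (k + 1) = bc K j (k + 1) + bc K j k := by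
  rw [add_comm 1 j]
  simp only [bc]
  rw [Ring.choose_succ_succ]
  push_cast
  ring


lemma single_sub' {G : Type*} (a : G) (b₁ b₂ : K) :
    AddMonoidAlgebra.single a (b₁ - b₂)
      = AddMonoidAlgebra.single a b₁ - AddMonoidAlgebra.single a b₂ :=
  map_sub (AddMonoidAlgebra.singleAddHom a) _ _

/-- The `k`-th Hasse-derivative-in-`y`-at-`1` coefficient map. -/
noncomputable def Dk (k : ℕ) (F : Laurent2 K) : R1 K :=
  F.coeff.sum fun p c => AddMonoidAlgebra.single p.1 (c * bc K p.2 k)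

lemma Dk_single (k : ℕ) (p : ℤ × ℤ) (c : K) :
    Dk k (AddMonoidAlgebra.single p c) = AddMonoidAlgebra.single p.1 (c * bc K p.2 k) :=
  Finsupp.sum_single_index (by simp)

lemma Dk_zero (k : ℕ) : Dk k (0 : Laurent2 K) = 0 :=
  Finsupp.sum_zero_index

lemma Dk_add (k : ℕ) (F G : Laurent2 K) : Dk k (F + G) = Dk k F + Dk k G :=
  Finsupp.sum_add_index' (by simp) (by intro a b₁ b₂; rw [add_mul, AddMonoidAlgebra.single_add])

lemma Dk_sub (k : ℕ) (F G : Laurent2 K) : Dk k (F - G) = Dk k F - Dk k G :=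
  Finsupp.sum_sub_index (by intro a b₁ b₂; rw [sub_mul, single_sub'])

lemma Lx_mul_single (i j : ℤ) (c : K) :
    Lx K * AddMonoidAlgebra.single (i, j) c = AddMonoidAlgebra.single (1 + i, j) c := by
  rw [Lx, AddMonoidAlgebra.single_mul_single, one_mul]
  norm_num

lemma Ly_mul_single (i j : ℤ) (c : K) :
    Ly K * AddMonoidAlgebra.single (i, j) c = AddMonoidAlgebra.single (i, 1 + j) c := by
  rw [Ly, AddMonoidAlgebra.single_mul_single, one_mul]
  norm_num

lemma Dk_Lx_mul (k : ℕ) (u : Laurent2 K) : Dk k (Lx K * u) = Tm K * Dk k u := by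
  induction u using AddMonoidAlgebra.induction_linear with
  | zero => simp [Dk_zero]
  | add f g hf hg => rw [mul_add, Dk_add, hf, hg, Dk_add, mul_add]
  | single p c =>
    obtain ⟨i, j⟩ := p
    rw [Lx_mul_single, Dk_single, Dk_single, Tm, AddMonoidAlgebra.single_mul_single, one_mul]

lemma Dk_Ly_mul_zero (v : Laurent2 K) : Dk 0 (Ly K * v) = Dk 0 v := by
  induction v using AddMonoidAlgebra.induction_linear with
  | zero => simp [Dk_zero]
  | add f g hf hg => rw [mul_add, Dk_add, hf, hg, Dk_add]
  | single p c =>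
    obtain ⟨i, j⟩ := p
    rw [Ly_mul_single, Dk_single, Dk_single, bc_zero, bc_zero]

lemma Dk_Ly_mul_succ (k : ℕ) (v : Laurent2 K) :
    Dk (k + 1) (Ly K * v) = Dk (k + 1) v + Dk k v := by
  induction v using AddMonoidAlgebra.induction_linear with
  | zero => simp [Dk_zero]
  | add f g hf hg =>
    rw [mul_add, Dk_add, hf, hg, Dk_add, Dk_add]
    ring
  | single p c =>
    obtain ⟨i, j⟩ := p
    rw [Ly_mul_single, Dk_single, Dk_single, Dk_single, bc_pascal, mul_add,
      AddMonoidAlgebra.single_add]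

lemma Dk_Lxsub_mul (k : ℕ) (u : Laurent2 K) :
    Dk k ((Lx K - 1) * u) = (Tm K - 1) * Dk k u := by
  rw [sub_mul, one_mul, Dk_sub, Dk_Lx_mul, sub_mul, one_mul]

lemma Dk_Lysub_mul_zero (v : Laurent2 K) : Dk 0 ((Ly K - 1) * v) = 0 := by
  rw [sub_mul, one_mul, Dk_sub, Dk_Ly_mul_zero, sub_self]

lemma Dk_Lysub_mul_succ (k : ℕ) (v : Laurent2 K) :
    Dk (k + 1) ((Ly K - 1) * v) = Dk k v := by
  rw [sub_mul, one_mul, Dk_sub, Dk_Ly_mul_succ]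
  ring

/-- Embedding of one-variable Laurent polynomials as `x`-only Laurent polynomials. -/
noncomputable def eta (g : R1 K) : Laurent2 K :=
  g.coeff.sum fun i c => AddMonoidAlgebra.single (i, 0) c

lemma eta_zero : eta (0 : R1 K) = 0 := Finsupp.sum_zero_index

lemma eta_add (g h : R1 K) : eta (g + h) = eta g + eta h :=
  Finsupp.sum_add_index' (by simp) (by intro a b₁ b₂; rw [AddMonoidAlgebra.single_add])

lemma eta_single (i : ℤ) (c : K) :
    eta (AddMonoidAlgebra.single i c) = AddMonoidAlgebra.single (i, 0) c :=
  Finsupp.sum_single_index (by simp)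

lemma dvd_ypow_sub_one (j : ℤ) :
    (Ly K - 1) ∣ (AddMonoidAlgebra.single ((0 : ℤ), j) (1 : K) - 1) := by
  induction j using Int.induction_on with
  | zero =>
    have h : AddMonoidAlgebra.single ((0 : ℤ), (0 : ℤ)) (1 : K) = 1 :=
      (AddMonoidAlgebra.one_def).symm
    rw [h, sub_self]
    exact dvd_zero _
  | succ j ih =>
    obtain ⟨c, hc⟩ := ih
    refine ⟨Ly K * c + 1, ?_⟩
    have h1 : AddMonoidAlgebra.single ((0 : ℤ), (j : ℤ) + 1) (1 : K)
        = Ly K * AddMonoidAlgebra.single ((0 : ℤ), (j : ℤ)) (1 : K) := by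
      rw [Ly_mul_single, add_comm]
    linear_combination Ly K * hc + h1
  | pred j ih =>
    obtain ⟨c, hc⟩ := ih
    set yi : Laurent2 K := AddMonoidAlgebra.single ((0 : ℤ), (-1 : ℤ)) (1 : K) with hyi
    have h1 : yi * Ly K = 1 := by
      rw [hyi, Ly, AddMonoidAlgebra.single_mul_single, one_mul]
      norm_num
      exact (AddMonoidAlgebra.one_def).symm
    have h2 : yi * AddMonoidAlgebra.single ((0 : ℤ), (-(j : ℤ))) (1 : K)
        = AddMonoidAlgebra.single ((0 : ℤ), (-(j : ℤ) - 1)) (1 : K) := by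
      rw [hyi, AddMonoidAlgebra.single_mul_single, one_mul]
      norm_num
      ring_nf
    refine ⟨yi * c - yi, ?_⟩
    linear_combination yi * hc - h2 + h1

lemma decomp (F : Laurent2 K) : ∃ G, F = (Ly K - 1) * G + eta (Dk 0 F) := by
  induction F using AddMonoidAlgebra.induction_linear with
  | zero => exact ⟨0, by simp [Dk_zero, eta_zero]⟩
  | add f g hf hg =>
    obtain ⟨G1, h1⟩ := hf
    obtain ⟨G2, h2⟩ := hg
    refine ⟨G1 + G2, ?_⟩
    rw [Dk_add, eta_add, mul_add]
    conv_lhs => rw [h1, h2]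
    ring
  | single p c =>
    obtain ⟨i, j⟩ := p
    rw [Dk_single, bc_zero, mul_one, eta_single]
    obtain ⟨c', hc'⟩ := dvd_ypow_sub_one (K := K) j
    refine ⟨AddMonoidAlgebra.single ((i : ℤ), (0 : ℤ)) c * c', ?_⟩
    have key : AddMonoidAlgebra.single ((i : ℤ), j) c
        = AddMonoidAlgebra.single ((i : ℤ), (0 : ℤ)) c
            * (AddMonoidAlgebra.single ((0 : ℤ), j) (1 : K) - 1)
          + AddMonoidAlgebra.single ((i : ℤ), (0 : ℤ)) c := by
      rw [mul_sub, AddMonoidAlgebra.single_mul_single, mul_one]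
      norm_num
    linear_combination key + AddMonoidAlgebra.single ((i : ℤ), (0 : ℤ)) c * hc'

lemma taylor : ∀ (a : ℕ) (F : Laurent2 K), (∀ k < a, Dk k F = 0) → (Ly K - 1) ^ a ∣ F := by
  intro a
  induction a with
  | zero => intro F _; simpa using one_dvd F
  | succ a ih =>
    intro F hF
    obtain ⟨G, hG⟩ := decomp F
    have h0 : Dk 0 F = 0 := hF 0 (Nat.succ_pos a)
    rw [h0, eta_zero, add_zero] at hG
    have hGk : ∀ k < a, Dk k G = 0 := by
      intro k hk
      have h1 : Dk (k + 1) F = 0 := hF (k + 1) (by omega)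
      rw [hG, Dk_Lysub_mul_succ] at h1
      exact h1
    obtain ⟨H, hH⟩ := ih G hGk
    exact ⟨H, by rw [hG, hH, pow_succ']; ring⟩

lemma lemA : ∀ (m : ℕ) (F : Laurent2 K), F ∈ idealPt K ^ m →
    ∀ k : ℕ, (Tm K - 1) ^ (m - k) ∣ Dk k F := by
  intro m
  induction m with
  | zero => intro F _ k; simp
  | succ m ih =>
    intro F hF k
    have hsplit : idealPt K ^ (m + 1)
        = Ideal.span {Lx K - 1} * idealPt K ^ m ⊔ Ideal.span {Ly K - 1} * idealPt K ^ m := by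
      rw [pow_succ', idealPt, Ideal.span_insert, Ideal.sup_mul]
    rw [hsplit] at hF
    obtain ⟨F1, hF1, F2, hF2, heq⟩ := Submodule.mem_sup.mp hF
    obtain ⟨u, hu, hue⟩ := Ideal.mem_span_singleton_mul.mp hF1
    obtain ⟨v, hv, hve⟩ := Ideal.mem_span_singleton_mul.mp hF2
    have e0 : Dk k F = Dk k F1 + Dk k F2 := by rw [← heq, Dk_add]
    have e1 : Dk k F1 = (Tm K - 1) * Dk k u := by rw [← hue, Dk_Lxsub_mul]
    have d1 : (Tm K - 1) ^ (m + 1 - k) ∣ Dk k F1 := by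
      rw [e1]
      refine dvd_trans (pow_dvd_pow _ (show m + 1 - k ≤ (m - k) + 1 by omega)) ?_
      rw [pow_succ']
      exact mul_dvd_mul_left _ (ih u hu k)
    have d2 : (Tm K - 1) ^ (m + 1 - k) ∣ Dk k F2 := by
      cases k with
      | zero =>
        have : Dk 0 F2 = 0 := by rw [← hve, Dk_Lysub_mul_zero]
        rw [this]
        exact dvd_zero _
      | succ k =>
        have e2 : Dk (k + 1) F2 = Dk k v := by rw [← hve, Dk_Lysub_mul_succ]
        rw [e2, Nat.succ_sub_succ]
        exact ih v hv k
    rw [e0]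
    exact dvd_add d1 d2

lemma coeff_Tsub_mul (g : R1 K) (n : ℤ) : ((Tm K - 1) * g).coeff n = g.coeff (n - 1) - g.coeff n := by
  have h1 : (Tm K * g).coeff n = g.coeff (n - 1) := by
    rw [Tm, AddMonoidAlgebra.coeff_single_mul_apply, one_mul]
    congr 1
    ring
  have h2 : ((Tm K - 1) * g).coeff n = (Tm K * g).coeff n - g.coeff n := by
    rw [sub_mul, one_mul]
    rfl
  rw [h2, h1]

lemma gap_step (g : R1 K) (w : ℤ) (h : ∃ s ∈ g.coeff.support, ∃ t ∈ g.coeff.support, t + w ≤ s) :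
    ∃ s ∈ ((Tm K - 1) * g).coeff.support, ∃ t ∈ ((Tm K - 1) * g).coeff.support, t + (w + 1) ≤ s := by
  obtain ⟨s, hs, t, ht, hst⟩ := h
  have hne : g.coeff.support.Nonempty := ⟨s, hs⟩
  set M := g.coeff.support.max' hne with hM
  set m0 := g.coeff.support.min' hne with hm0
  have hMmem := g.coeff.support.max'_mem hne
  have hm0mem := g.coeff.support.min'_mem hne
  have hgM : g.coeff M ≠ 0 := Finsupp.mem_support_iff.mp hMmem
  have hgm0 : g.coeff m0 ≠ 0 := Finsupp.mem_support_iff.mp hm0mem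
  have hM1 : g.coeff (M + 1) = 0 := by
    by_contra hx
    have : M + 1 ≤ M := Finset.le_max' _ _ (Finsupp.mem_support_iff.mpr hx)
    omega
  have hm1 : g.coeff (m0 - 1) = 0 := by
    by_contra hx
    have : m0 ≤ m0 - 1 := Finset.min'_le _ _ (Finsupp.mem_support_iff.mpr hx)
    omega
  have htop : ((Tm K - 1) * g).coeff (M + 1) ≠ 0 := by
    rw [coeff_Tsub_mul]
    simpa [hM1] using hgM
  have hbot : ((Tm K - 1) * g).coeff m0 ≠ 0 := by
    rw [coeff_Tsub_mul, hm1, zero_sub]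
    exact neg_ne_zero.mpr hgm0
  refine ⟨M + 1, Finsupp.mem_support_iff.mpr htop, m0, Finsupp.mem_support_iff.mpr hbot, ?_⟩
  have h1 : s ≤ M := Finset.le_max' _ _ hs
  have h2 : m0 ≤ t := Finset.min'_le _ _ ht
  omega

lemma gap_pow : ∀ (w : ℕ) (g : R1 K), g ≠ 0 →
    ∃ s ∈ ((Tm K - 1) ^ w * g).coeff.support, ∃ t ∈ ((Tm K - 1) ^ w * g).coeff.support,
      t + (w : ℤ) ≤ s := by
  intro w
  induction w with
  | zero =>
    intro g hg
    obtain ⟨s, hs⟩ := Finsupp.support_nonempty_iff.mpr (mt AddMonoidAlgebra.coeff_eq_zero.mp hg)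
    rw [pow_zero, one_mul]
    exact ⟨s, hs, s, hs, by simp⟩
  | succ w ih =>
    intro g hg
    have h2 := gap_step ((Tm K - 1) ^ w * g) (w : ℤ) (ih g hg)
    rw [pow_succ', mul_assoc]
    obtain ⟨s, hs, t, ht, hst⟩ := h2
    exact ⟨s, hs, t, ht, by push_cast; omega⟩

lemma Dk_support (k : ℕ) (F : Laurent2 K) :
    (Dk k F).coeff.support ⊆ F.coeff.support.image Prod.fst := by
  classical
  intro n hn
  rw [Dk, AddMonoidAlgebra.coeff_finsuppSum] at hn
  have h := Finsupp.support_sum hn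
  rw [Finset.mem_biUnion] at h
  obtain ⟨p, hp, hn2⟩ := h
  have h3 := Finsupp.support_single_subset hn2
  rw [Finset.mem_singleton] at h3
  subst h3
  exact Finset.mem_image_of_mem _ hp

end VD

theorem vertical_divisibility_of_small_width (F : Laurent2 K) (hF : F ≠ 0)
    (hne : F.coeff.support.Nonempty) (m a : ℕ) (ha : 0 < a)
    (hmem : F ∈ idealPt K ^ m)
    (hwidth : F.coeff.support.sup' hne (fun p => p.1) - F.coeff.support.inf' hne (fun p => p.1)
      = (m : ℤ) - (a : ℤ)) :
    (Ly K - 1) ^ a ∣ F := by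
  classical
  obtain ⟨p0, hp0⟩ := hne
  have hinf0 : F.coeff.support.inf' ⟨p0, hp0⟩ (fun p => p.1) ≤ p0.1 := Finset.inf'_le _ hp0
  have hsup0 : p0.1 ≤ F.coeff.support.sup' ⟨p0, hp0⟩ (fun p => p.1) := Finset.le_sup' _ hp0
  have ham : a ≤ m := by omega
  have hDzero : ∀ k, k < a → VD.Dk k F = 0 := by
    intro k hk
    by_contra hDk
    obtain ⟨g, hg⟩ := VD.lemA m F hmem k
    have hgne : g ≠ 0 := by
      rintro rfl
      rw [mul_zero] at hg
      exact hDk hg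
    obtain ⟨s, hs, t, ht, hst⟩ := VD.gap_pow (m - k) g hgne
    rw [← hg] at hs ht
    have hsub := VD.Dk_support k F
    have hs' : s ≤ F.coeff.support.sup' ⟨p0, hp0⟩ (fun p => p.1) := by
      have h4 := hsub hs
      rw [Finset.mem_image] at h4
      obtain ⟨p, hp, rfl⟩ := h4
      exact Finset.le_sup' _ hp
    have ht' : F.coeff.support.inf' ⟨p0, hp0⟩ (fun p => p.1) ≤ t := by
      have h4 := hsub ht
      rw [Finset.mem_image] at h4
      obtain ⟨p, hp, rfl⟩ := h4
      exact Finset.inf'_le _ hp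
    omega
  exact VD.taylor a F hDzero

end
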